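/- Let p > 1, q > 1 with 1/p + 1/q = 1, set A = (2 − 1/p)/3 and B = (1 + 1/p)/3, and let n be a positive integer. If a_1,…,a_n > 0 and b_1,…,b_n > 0 satisfy Σ_{k=1}^n a_k = 1 and Σ_{k=1}^n b_k = 1, then 1 − Σ_{k=1}^n a_k^{1/p} b_k^{1/q} ≥ (1/(2pq)) Σ_{k=1}^n (a_k − b_k)^2 / (A·a_k + B·b_k). -/

import Mathlib

open Real Set

private lemma nonneg_of_deriv_sign (g g' : ℝ → ℝ)
    (hd : ∀ t ∈ Ioi (0:ℝ), HasDerivAt g (g' t) t)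
    (h1 : g 1 = 0)
    (hneg : ∀ t ∈ Ioo (0:ℝ) 1, g' t ≤ 0)
    (hpos : ∀ t ∈ Ioi (1:ℝ), 0 ≤ g' t) :
    ∀ t ∈ Ioi (0:ℝ), 0 ≤ g t := by
  intro t ht
  have hdiff : ∀ x ∈ Ioi (0:ℝ), DifferentiableAt ℝ g x :=
    fun x hx => (hd x hx).differentiableAt
  rcases le_or_gt 1 t with h | h
  · have hmono : MonotoneOn g (Ici (1:ℝ)) := by
      apply monotoneOn_of_deriv_nonneg (convex_Ici 1)
      · exact fun x hx => ((hdiff x (mem_Ioi.mpr (lt_of_lt_of_le one_pos (mem_Ici.mp hx)))).continuousAt).continuousWithinAt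
      · intro x hx
        rw [interior_Ici] at hx
        exact ((hdiff x (mem_Ioi.mpr (lt_trans one_pos (mem_Ioi.mp hx)))).differentiableWithinAt)
      · intro x hx
        rw [interior_Ici] at hx
        rw [(hd x (mem_Ioi.mpr (lt_trans one_pos (mem_Ioi.mp hx)))).deriv]
        exact hpos x hx
    have := hmono (self_mem_Ici) h h
    rwa [h1] at this
  · have hanti : AntitoneOn g (Ioc (0:ℝ) 1) := by
      apply antitoneOn_of_deriv_nonpos (convex_Ioc 0 1)
      · exact fun x hx => ((hdiff x hx.1).continuousAt).continuousWithinAt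
      · intro x hx
        rw [interior_Ioc] at hx
        exact ((hdiff x hx.1).differentiableWithinAt)
      · intro x hx
        rw [interior_Ioc] at hx
        rw [(hd x hx.1).deriv]
        exact hneg x hx
    have := hanti ⟨ht, h.le⟩ ⟨one_pos, le_refl 1⟩ h.le
    rwa [h1] at this

private lemma sign_of_deriv_nonneg (g g' : ℝ → ℝ)
    (hd : ∀ t ∈ Ioi (0:ℝ), HasDerivAt g (g' t) t)
    (h1 : g 1 = 0)
    (h' : ∀ t ∈ Ioi (0:ℝ), 0 ≤ g' t) :
    (∀ t ∈ Ioo (0:ℝ) 1, g t ≤ 0) ∧ (∀ t ∈ Ioi (1:ℝ), 0 ≤ g t) := by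
  have hdiff : ∀ x ∈ Ioi (0:ℝ), DifferentiableAt ℝ g x :=
    fun x hx => (hd x hx).differentiableAt
  have hmono : MonotoneOn g (Ioi (0:ℝ)) := by
    apply monotoneOn_of_deriv_nonneg (convex_Ioi 0)
    · exact fun x hx => ((hdiff x hx).continuousAt).continuousWithinAt
    · intro x hx
      rw [interior_Ioi] at hx
      exact (hdiff x hx).differentiableWithinAt
    · intro x hx
      rw [interior_Ioi] at hx
      rw [(hd x hx).deriv]
      exact h' x hx
  constructor
  · intro t htm
    have := hmono (mem_Ioi.mpr htm.1) (mem_Ioi.mpr one_pos) htm.2.le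
    rwa [h1] at this
  · intro t htm
    have := hmono (mem_Ioi.mpr one_pos) (mem_Ioi.mpr (lt_trans one_pos htm)) (le_of_lt htm)
    rwa [h1] at this


noncomputable def Fa (s t : ℝ) : ℝ :=
  ((2-s)*t + (1+s))/3 * (s*t + (1-s) - t ^ s) - s*(1-s)/2*(t-1)^2

noncomputable def Fb (s t : ℝ) : ℝ :=
  (2-s)/3 * (s*t + (1-s) - t ^ s) + ((2-s)*t + (1+s))/3 * (s - s * t ^ (s-1))
    - s*(1-s)*(t-1)

noncomputable def Fc (s t : ℝ) : ℝ :=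
  2*((2-s)/3) * (s - s * t ^ (s-1)) + s*(1-s) * (((2-s)*t + (1+s))/3 * t ^ (s-2)) - s*(1-s)

noncomputable def Fd (s t : ℝ) : ℝ :=
  s*(1-s)*(2-s)*(1+s)/3 * (t ^ (s-2) - t ^ (s-3))

lemma hasDerivAt_Fa (s t : ℝ) (ht : 0 < t) : HasDerivAt (Fa s) (Fb s t) t := by
  have hts : HasDerivAt (fun x : ℝ => x ^ s) (s * t ^ (s-1)) t :=
    Real.hasDerivAt_rpow_const (Or.inl (ne_of_gt ht))
  have h1 : HasDerivAt (fun x : ℝ => ((2-s)*x + (1+s))/3) ((2-s)/3) t := by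
    have := (((hasDerivAt_id t).const_mul (2-s)).add_const (1+s)).div_const 3
    convert this using 1
    iterate 3 rfl
    try simp only [id_eq]
    ring
  have h2 : HasDerivAt (fun x : ℝ => s*x + (1-s) - x ^ s) (s - s * t ^ (s-1)) t := by
    have := (((hasDerivAt_id t).const_mul s).add_const (1-s)).sub hts
    convert this using 1
    iterate 3 rfl
    try simp only [id_eq]
    ring
  have h3 : HasDerivAt (fun x : ℝ => s*(1-s)/2*(x-1)^2) (s*(1-s)*(t-1)) t := by
    have := (((hasDerivAt_id t).sub_const 1).pow 2).const_mul (s*(1-s)/2)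
    convert this using 1
    iterate 3 rfl
    try simp only [id_eq]
    ring
  have := (h1.mul h2).sub h3
  exact this

lemma hasDerivAt_Fb (s t : ℝ) (ht : 0 < t) : HasDerivAt (Fb s) (Fc s t) t := by
  have hts : HasDerivAt (fun x : ℝ => x ^ s) (s * t ^ (s-1)) t :=
    Real.hasDerivAt_rpow_const (Or.inl (ne_of_gt ht))
  have hts1 : HasDerivAt (fun x : ℝ => x ^ (s-1)) ((s-1) * t ^ (s-2)) t := by
    have := Real.hasDerivAt_rpow_const (x := t) (p := s-1) (Or.inl (ne_of_gt ht))
    rwa [show s-1-1 = s-2 by ring] at this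
  have h2 : HasDerivAt (fun x : ℝ => s*x + (1-s) - x ^ s) (s - s * t ^ (s-1)) t := by
    have := (((hasDerivAt_id t).const_mul s).add_const (1-s)).sub hts
    convert this using 1
    iterate 3 rfl
    try simp only [id_eq]
    ring
  have h1 : HasDerivAt (fun x : ℝ => ((2-s)*x + (1+s))/3) ((2-s)/3) t := by
    have := (((hasDerivAt_id t).const_mul (2-s)).add_const (1+s)).div_const 3
    convert this using 1
    iterate 3 rfl
    try simp only [id_eq]
    ring
  have h4 : HasDerivAt (fun x : ℝ => s - s * x ^ (s-1)) (-(s * ((s-1) * t ^ (s-2)))) t := by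
    have := (hts1.const_mul s).const_sub s
    convert this using 1
  have h5 : HasDerivAt (fun x : ℝ => s*(1-s)*(x-1)) (s*(1-s)) t := by
    have := ((hasDerivAt_id t).sub_const 1).const_mul (s*(1-s))
    convert this using 1
    iterate 3 rfl
    try simp only [id_eq]
    ring
  have := ((h2.const_mul ((2-s)/3)).add (h1.mul h4)).sub h5
  convert this using 1
  iterate 3 rfl
  simp only [Fc]
  try simp only [id_eq]
  ring

lemma hasDerivAt_Fc (s t : ℝ) (ht : 0 < t) : HasDerivAt (Fc s) (Fd s t) t := by
  have hts1 : HasDerivAt (fun x : ℝ => x ^ (s-1)) ((s-1) * t ^ (s-2)) t := by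
    have := Real.hasDerivAt_rpow_const (x := t) (p := s-1) (Or.inl (ne_of_gt ht))
    rwa [show s-1-1 = s-2 by ring] at this
  have hts2 : HasDerivAt (fun x : ℝ => x ^ (s-2)) ((s-2) * t ^ (s-3)) t := by
    have := Real.hasDerivAt_rpow_const (x := t) (p := s-2) (Or.inl (ne_of_gt ht))
    rwa [show s-2-1 = s-3 by ring] at this
  have h1 : HasDerivAt (fun x : ℝ => ((2-s)*x + (1+s))/3) ((2-s)/3) t := by
    have := (((hasDerivAt_id t).const_mul (2-s)).add_const (1+s)).div_const 3
    convert this using 1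
    iterate 3 rfl
    try simp only [id_eq]
    ring
  have h4 : HasDerivAt (fun x : ℝ => s - s * x ^ (s-1)) (-(s * ((s-1) * t ^ (s-2)))) t := by
    have := (hts1.const_mul s).const_sub s
    convert this using 1
  have h6 : HasDerivAt (fun x : ℝ => ((2-s)*x + (1+s))/3 * x ^ (s-2))
      ((2-s)/3 * t ^ (s-2) + ((2-s)*t + (1+s))/3 * ((s-2) * t ^ (s-3))) t := h1.mul hts2
  have := (h4.const_mul (2*((2-s)/3))).add ((h6.const_mul (s*(1-s))).sub_const (s*(1-s)))
  have ht2 : t ^ (s-2) = t ^ (s-3) * t := by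
    rw [← Real.rpow_add_one (ne_of_gt ht), show s-3+1 = s-2 by ring]
  convert this using 1
  iterate 2 rfl
  · funext x; simp only [Fc, Pi.add_apply]; ring
  · unfold Fd; rw [ht2]; ring

lemma Fa_nonneg (s : ℝ) (hs0 : 0 < s) (hs1 : s < 1) :
    ∀ t ∈ Ioi (0:ℝ), 0 ≤ Fa s t := by
  have h1s : 0 < 1 - s := by linarith
  have h2s : 0 < 2 - s := by linarith
  have h3s : 0 < 1 + s := by linarith
  have hc : 0 < s*(1-s)*(2-s)*(1+s)/3 := by
    have := mul_pos (mul_pos (mul_pos hs0 h1s) h2s) h3s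
    nlinarith
  -- sign of Fd
  have hfact : ∀ t : ℝ, 0 < t → Fd s t = s*(1-s)*(2-s)*(1+s)/3 * (t ^ (s-3) * (t-1)) := by
    intro t ht
    have ht2 : t ^ (s-2) = t ^ (s-3) * t := by
      rw [← Real.rpow_add_one (ne_of_gt ht), show s-3+1 = s-2 by ring]
    unfold Fd; rw [ht2]; ring
  have hFdneg : ∀ t ∈ Ioo (0:ℝ) 1, Fd s t ≤ 0 := by
    intro t ht
    rw [hfact t ht.1]
    have h1 : (0:ℝ) < t ^ (s-3) := Real.rpow_pos_of_pos ht.1 _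
    have h2 : t - 1 ≤ 0 := by linarith [ht.2]
    have h3 : t ^ (s-3) * (t-1) ≤ 0 := mul_nonpos_iff.mpr (Or.inl ⟨h1.le, h2⟩)
    exact mul_nonpos_iff.mpr (Or.inl ⟨hc.le, h3⟩)
  have hFdpos : ∀ t ∈ Ioi (1:ℝ), 0 ≤ Fd s t := by
    intro t ht
    have ht0 : (0:ℝ) < t := lt_trans one_pos ht
    rw [hfact t ht0]
    have h1 : (0:ℝ) < t ^ (s-3) := Real.rpow_pos_of_pos ht0 _
    have h2 : (1:ℝ) < t := mem_Ioi.mp ht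
    exact mul_nonneg hc.le (mul_nonneg h1.le (by linarith))
  have hFc1 : Fc s 1 = 0 := by
    unfold Fc; rw [Real.one_rpow, Real.one_rpow]; ring
  have hFc : ∀ t ∈ Ioi (0:ℝ), 0 ≤ Fc s t :=
    nonneg_of_deriv_sign (Fc s) (Fd s) (fun t ht => hasDerivAt_Fc s t (mem_Ioi.mp ht))
      hFc1 hFdneg hFdpos
  have hFb1 : Fb s 1 = 0 := by
    unfold Fb; rw [Real.one_rpow, Real.one_rpow]; ring
  have hFb := sign_of_deriv_nonneg (Fb s) (Fc s)
      (fun t ht => hasDerivAt_Fb s t (mem_Ioi.mp ht)) hFb1 hFc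
  have hFa1 : Fa s 1 = 0 := by
    unfold Fa; rw [Real.one_rpow]; ring
  exact nonneg_of_deriv_sign (Fa s) (Fb s)
      (fun t ht => hasDerivAt_Fa s t (mem_Ioi.mp ht)) hFa1 hFb.1 hFb.2

lemma pointwise_ineq (s x y : ℝ) (hs0 : 0 < s) (hs1 : s < 1) (hx : 0 < x) (hy : 0 < y) :
    s*(1-s)/2 * ((x-y)^2 / ((2-s)/3 * x + (1+s)/3 * y)) ≤ s*x + (1-s)*y - x ^ s * y ^ (1-s) := by
  have ht : (0:ℝ) < x/y := div_pos hx hy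
  have h := Fa_nonneg s hs0 hs1 (x/y) (mem_Ioi.mpr ht)
  unfold Fa at h
  have hys : (0:ℝ) < y ^ s := Real.rpow_pos_of_pos hy s
  have hxy : (x/y) ^ s = x ^ s / y ^ s := Real.div_rpow hx.le hy.le s
  have hy1s : y ^ (1-s) = y / y ^ s := by
    rw [Real.rpow_sub hy, Real.rpow_one]
  have hD : 0 < (2-s)/3 * x + (1+s)/3 * y := by nlinarith
  rw [← mul_div_assoc, div_le_iff₀ hD]
  have key : y^2 * (((2-s)*(x/y) + (1+s))/3 * (s*(x/y) + (1-s) - (x/y)^s) - s*(1-s)/2*((x/y)-1)^2)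
      = (s*x + (1-s)*y - x ^ s * y ^ (1-s)) * ((2-s)/3 * x + (1+s)/3 * y)
        - s*(1-s)/2*(x-y)^2 := by
    rw [hxy, hy1s]
    field_simp
  have h3 : 0 ≤ y^2 * (((2-s)*(x/y) + (1+s))/3 * (s*(x/y) + (1-s) - (x/y)^s) - s*(1-s)/2*((x/y)-1)^2) :=
    mul_nonneg (sq_nonneg y) h
  rw [key] at h3
  linarith

theorem holder_stability_pointwise_sum
    (p q : ℝ) (hp : 1 < p) (hq : 1 < q) (hpq : 1/p + 1/q = 1)
    (A B : ℝ) (hA : A = (2 - 1/p)/3) (hB : B = (1 + 1/p)/3)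
    (n : ℕ) (hn : 0 < n) (a b : Fin n → ℝ)
    (ha : ∀ k, 0 < a k) (hb : ∀ k, 0 < b k)
    (hsa : ∑ k, a k = 1) (hsb : ∑ k, b k = 1) :
    1 - ∑ k, (a k) ^ (1/p) * (b k) ^ (1/q)
      ≥ (1/(2*p*q)) * ∑ k, (a k - b k)^2 / (A * a k + B * b k) := by
  have hp0 : 0 < p := lt_trans one_pos hp
  have hq0 : 0 < q := lt_trans one_pos hq
  have hs0 : 0 < 1/p := by positivity
  have hs1 : 1/p < 1 := (div_lt_one hp0).mpr hp
  have hq1s : 1/q = 1 - 1/p := by linarith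
  have hcc : 1/(2*p*q) = (1/p)*(1-(1/p))/2 := by
    rw [← hq1s]; field_simp
  have hpt : ∀ k, (1/(2*p*q)) * ((a k - b k)^2 / (A * a k + B * b k))
      ≤ (1/p) * a k + (1/q) * b k - (a k) ^ (1/p) * (b k) ^ (1/q) := by
    intro k
    rw [hq1s, hA, hB, hcc]
    exact pointwise_ineq (1/p) (a k) (b k) hs0 hs1 (ha k) (hb k)
  rw [ge_iff_le]
  have hsum1 : ∑ k, ((1/p) * a k + (1/q) * b k) = 1 := by
    rw [Finset.sum_add_distrib, ← Finset.mul_sum, ← Finset.mul_sum, hsa, hsb, mul_one, mul_one,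
      hpq]
  have hrw : 1 - ∑ k, (a k) ^ (1/p) * (b k) ^ (1/q)
      = ∑ k, ((1/p) * a k + (1/q) * b k - (a k) ^ (1/p) * (b k) ^ (1/q)) := by
    rw [Finset.sum_sub_distrib, hsum1]
  rw [hrw, Finset.mul_sum]
  exact Finset.sum_le_sum (fun k _ => hpt k)
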